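/- arXiv:1409.0695 — 10 statements merged into one kernel-verified Lean document; each statement's English description precedes it below -/
import Mathlib

section
/- Let (S, P) be pointwise k-poly-Poisson data on a real vector space V and set D := P(S) ⊆ V. Then there is a unique ℝ^k-valued bilinear form ω on D with ω(P(η), P(γ)) = η(P(γ)) for all η, γ ∈ S; moreover ω is alternating and nondegenerate on D (the map D → Hom(D, ℝ^k), X ↦ ω(X, ·), is injective). (This is the fiberwise construction of the poly-symplectic forms on the leaves of the foliation of a poly-Poisson manifold.) -/
set_option synthInstance.maxHeartbeats 1000000
set_option maxHeartbeats 1000000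


/-- For pointwise `k`-poly-Poisson data `(S, P)` on `V` and `D := P(S)`,
there is a unique `ℝ^k`-valued bilinear form `ω` on `D` with `ω(P(η), P(γ)) = η(P(γ))`;
moreover any such `ω` is alternating and nondegenerate. -/
theorem stmt3 (k : ℕ) (hk : 0 < k) (V : Type*) [AddCommGroup V] [Module ℝ V]
    (S : Submodule ℝ (V →ₗ[ℝ] (Fin k → ℝ))) (P : S →ₗ[ℝ] V)
    (h1 : ∀ η : S, (η : V →ₗ[ℝ] (Fin k → ℝ)) (P η) = 0)
    (h2 : ∀ X : V, (∀ η ∈ S, η X = 0) → X = 0) :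
    (∃! ω : LinearMap.range P →ₗ[ℝ] LinearMap.range P →ₗ[ℝ] (Fin k → ℝ),
      ∀ η γ : S,
        ω ⟨P η, LinearMap.mem_range_self P η⟩ ⟨P γ, LinearMap.mem_range_self P γ⟩
          = (η : V →ₗ[ℝ] (Fin k → ℝ)) (P γ)) ∧
    (∀ ω : LinearMap.range P →ₗ[ℝ] LinearMap.range P →ₗ[ℝ] (Fin k → ℝ),
      (∀ η γ : S,
        ω ⟨P η, LinearMap.mem_range_self P η⟩ ⟨P γ, LinearMap.mem_range_self P γ⟩
          = (η : V →ₗ[ℝ] (Fin k → ℝ)) (P γ)) →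
      (∀ X Y : LinearMap.range P, ω X Y = - ω Y X) ∧ Function.Injective ⇑ω) := by
  -- polarization identity
  have key : ∀ η γ : S, (η : V →ₗ[ℝ] (Fin k → ℝ)) (P γ)
      = - (γ : V →ₗ[ℝ] (Fin k → ℝ)) (P η) := by
    intro η γ
    have h := h1 (η + γ)
    simp only [Submodule.coe_add, map_add, LinearMap.add_apply, h1 η, h1 γ, zero_add,
      add_zero] at h
    exact eq_neg_of_add_eq_zero_right h
  -- the bilinear map `S → (range P → ℝ^k)`, `η ↦ (Z ↦ η Z)`
  set C : S →ₗ[ℝ] (LinearMap.range P →ₗ[ℝ] (Fin k → ℝ)) :=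
    { toFun := fun η => (η : V →ₗ[ℝ] (Fin k → ℝ)).comp (LinearMap.range P).subtype
      map_add' := fun η γ => by ext Z; rfl
      map_smul' := fun c η => by ext Z; rfl } with hC
  have hCapp : ∀ (η : S) (Z : LinearMap.range P),
      C η Z = (η : V →ₗ[ℝ] (Fin k → ℝ)) (Z : V) := fun η Z => rfl
  have hker : LinearMap.ker P ≤ LinearMap.ker C := by
    intro η hη
    rw [LinearMap.mem_ker] at hη ⊢
    ext Z
    obtain ⟨γ, hγ⟩ := Z.2
    have : (Z : V) = P γ := hγ.symm
    rw [hCapp, this, key η γ, hη]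
    simp
  obtain ⟨σ, hσ⟩ := P.rangeRestrict.exists_rightInverse_of_surjective
    (LinearMap.range_rangeRestrict P)
  have hσ' : ∀ X : LinearMap.range P, P (σ X) = (X : V) := by
    intro X
    have := LinearMap.congr_fun hσ X
    exact congrArg Subtype.val this
  set ω₀ : LinearMap.range P →ₗ[ℝ] LinearMap.range P →ₗ[ℝ] (Fin k → ℝ) :=
    C.comp σ with hω₀
  have hω₀spec : ∀ η γ : S,
      ω₀ ⟨P η, LinearMap.mem_range_self P η⟩ ⟨P γ, LinearMap.mem_range_self P γ⟩
        = (η : V →ₗ[ℝ] (Fin k → ℝ)) (P γ) := by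
    intro η γ
    have e1 : ω₀ ⟨P η, LinearMap.mem_range_self P η⟩ ⟨P γ, LinearMap.mem_range_self P γ⟩
        = ((σ ⟨P η, LinearMap.mem_range_self P η⟩ : S) : V →ₗ[ℝ] (Fin k → ℝ)) (P γ) := rfl
    rw [e1, key _ γ, hσ', key η γ]
  -- antisymmetry and injectivity of any ω satisfying the spec
  have main : ∀ ω : LinearMap.range P →ₗ[ℝ] LinearMap.range P →ₗ[ℝ] (Fin k → ℝ),
      (∀ η γ : S,
        ω ⟨P η, LinearMap.mem_range_self P η⟩ ⟨P γ, LinearMap.mem_range_self P γ⟩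
          = (η : V →ₗ[ℝ] (Fin k → ℝ)) (P γ)) →
      (∀ X Y : LinearMap.range P, ω X Y = - ω Y X) ∧ Function.Injective ⇑ω := by
    intro ω hω
    constructor
    · intro X Y
      obtain ⟨η, hη⟩ := X.2
      obtain ⟨γ, hγ⟩ := Y.2
      have hX : X = ⟨P η, LinearMap.mem_range_self P η⟩ := Subtype.ext hη.symm
      have hY : Y = ⟨P γ, LinearMap.mem_range_self P γ⟩ := Subtype.ext hγ.symm
      rw [hX, hY, hω η γ, hω γ η, key η γ]
    · intro X Y hXY
      obtain ⟨η, hη⟩ := X.2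
      obtain ⟨γ, hγ⟩ := Y.2
      have hX : X = ⟨P η, LinearMap.mem_range_self P η⟩ := Subtype.ext hη.symm
      have hY : Y = ⟨P γ, LinearMap.mem_range_self P γ⟩ := Subtype.ext hγ.symm
      have hall : ∀ δ : S, (δ : V →ₗ[ℝ] (Fin k → ℝ)) (P η - P γ) = 0 := by
        intro δ
        have h₁ : ω X ⟨P δ, LinearMap.mem_range_self P δ⟩
            = ω Y ⟨P δ, LinearMap.mem_range_self P δ⟩ := by rw [hXY]
        rw [hX, hY, hω η δ, hω γ δ] at h₁
        have h₂ := key η δ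
        have h₃ := key γ δ
        rw [map_sub]
        rw [h₁] at h₂
        rw [h₂] at h₃
        have := neg_injective h₃
        rw [sub_eq_zero]
        exact this
      have : P η - P γ = 0 := by
        apply h2
        intro f hf
        exact hall ⟨f, hf⟩
      have hPQ : P η = P γ := by rwa [sub_eq_zero] at this
      rw [hX, hY]
      exact Subtype.ext hPQ
  refine ⟨⟨ω₀, hω₀spec, ?_⟩, main⟩
  -- uniqueness
  intro ω hω
  apply LinearMap.ext; intro X
  obtain ⟨η, hη⟩ := X.2
  have hX : X = ⟨P η, LinearMap.mem_range_self P η⟩ := Subtype.ext hη.symm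
  subst hX
  apply LinearMap.ext; intro Y
  obtain ⟨γ, hγ⟩ := Y.2
  have hY : Y = ⟨P γ, LinearMap.mem_range_self P γ⟩ := Subtype.ext hγ.symm
  subst hY
  rw [hω η γ, hω₀spec η γ]
end

section
/- Let V be a finite-dimensional real vector space, let D ⊆ V be a subspace, and let ω be a nondegenerate ℝ^k-valued 2-form on D. Let S := {η ∈ Hom(V, ℝ^k) : there exists X ∈ D with η(Y) = ω(X, Y) for all Y ∈ D}. Then for every η ∈ S the element X ∈ D with η(Y) = ω(X, Y) for all Y ∈ D is unique; the resulting map P : S → V, P(η) := X, is linear, its range equals D, and η(P(η)) = 0 for all η ∈ S. (Together with S° = {0}, this is the pointwise content of the construction of a poly-Poisson structure from a regular poly-symplectic foliation.) -/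
/-- With `S := {η ∈ Hom(V, ℝ^k) : ∃ X ∈ D, η|_D = ω(X, ·)}` for a
nondegenerate `ℝ^k`-valued 2-form `ω` on a subspace `D` of a finite-dimensional `V`:
for each `η ∈ S` the witness `X ∈ D` is unique; `S` is a subspace, and the resulting map
`P : S → V` is linear, has range `D`, and satisfies `η(P(η)) = 0` for all `η ∈ S`. -/
theorem stmt6 (k : ℕ) (hk : 0 < k) (V : Type*) [AddCommGroup V] [Module ℝ V]
    [FiniteDimensional ℝ V] (D : Submodule ℝ V)
    (ω : D →ₗ[ℝ] D →ₗ[ℝ] (Fin k → ℝ))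
    (halt : ∀ X Y : D, ω X Y = - ω Y X)
    (hnd : Function.Injective ⇑ω) :
    (∀ η : V →ₗ[ℝ] (Fin k → ℝ), (∃ X : D, ∀ Y : D, η (Y : V) = ω X Y) →
      ∃! X : D, ∀ Y : D, η (Y : V) = ω X Y) ∧
    (∃ S : Submodule ℝ (V →ₗ[ℝ] (Fin k → ℝ)),
      (S : Set (V →ₗ[ℝ] (Fin k → ℝ))) = {η | ∃ X : D, ∀ Y : D, η (Y : V) = ω X Y} ∧
      ∃ P : S →ₗ[ℝ] V,
        (∀ η : S, ∃ X : D, (X : V) = P η ∧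
          ∀ Y : D, (η : V →ₗ[ℝ] (Fin k → ℝ)) (Y : V) = ω X Y) ∧
        LinearMap.range P = D ∧
        (∀ η : S, (η : V →ₗ[ℝ] (Fin k → ℝ)) (P η) = 0)) := by
  -- uniqueness of the witness
  have huniq : ∀ (η : V →ₗ[ℝ] (Fin k → ℝ)) (X X' : D),
      (∀ Y : D, η (Y : V) = ω X Y) → (∀ Y : D, η (Y : V) = ω X' Y) → X = X' := by
    intro η X X' hX hX'
    apply hnd
    ext Y
    have := (hX Y).symm.trans (hX' Y)
    simp [this]
  constructor
  · intro η ⟨X, hX⟩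
    exact ⟨X, hX, fun X' hX' => huniq η X' X hX' hX⟩
  · -- the submodule S
    refine ⟨{ carrier := {η | ∃ X : D, ∀ Y : D, η (Y : V) = ω X Y}
              add_mem' := by
                rintro η η' ⟨X, hX⟩ ⟨X', hX'⟩
                exact ⟨X + X', fun Y => by simp [hX Y, hX' Y]⟩
              zero_mem' := ⟨0, fun Y => by simp⟩
              smul_mem' := by
                rintro c η ⟨X, hX⟩
                exact ⟨c • X, fun Y => by simp [hX Y]⟩ }, rfl, ?_⟩
    set S : Submodule ℝ (V →ₗ[ℝ] (Fin k → ℝ)) :=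
      { carrier := {η | ∃ X : D, ∀ Y : D, η (Y : V) = ω X Y}
        add_mem' := by
          rintro η η' ⟨X, hX⟩ ⟨X', hX'⟩
          exact ⟨X + X', fun Y => by simp [hX Y, hX' Y]⟩
        zero_mem' := ⟨0, fun Y => by simp⟩
        smul_mem' := by
          rintro c η ⟨X, hX⟩
          exact ⟨c • X, fun Y => by simp [hX Y]⟩ } with hS
    have hmem : ∀ η : S, ∃ X : D, ∀ Y : D, (η : V →ₗ[ℝ] (Fin k → ℝ)) (Y : V) = ω X Y :=
      fun η => η.2
    choose g hg using hmem
    have hgu : ∀ (η : S) (X : D),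
        (∀ Y : D, (η : V →ₗ[ℝ] (Fin k → ℝ)) (Y : V) = ω X Y) → X = g η :=
      fun η X hX => huniq η X (g η) hX (hg η)
    have hadd : ∀ η η' : S, g (η + η') = g η + g η' := by
      intro η η'
      refine (hgu (η + η') (g η + g η') fun Y => ?_).symm
      have : ((η + η' : S) : V →ₗ[ℝ] (Fin k → ℝ)) (Y : V)
          = (η : V →ₗ[ℝ] (Fin k → ℝ)) (Y : V) + (η' : V →ₗ[ℝ] (Fin k → ℝ)) (Y : V) := rfl
      rw [this, hg η Y, hg η' Y]
      simp
    have hsmul : ∀ (c : ℝ) (η : S), g (c • η) = c • g η := by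
      intro c η
      refine (hgu (c • η) (c • g η) fun Y => ?_).symm
      have : ((c • η : S) : V →ₗ[ℝ] (Fin k → ℝ)) (Y : V)
          = c • (η : V →ₗ[ℝ] (Fin k → ℝ)) (Y : V) := rfl
      rw [this, hg η Y]
      simp
    refine ⟨{ toFun := fun η => (g η : V)
              map_add' := fun η η' => by
                show ((g (η + η') : D) : V) = ((g η : D) : V) + ((g η' : D) : V)
                rw [hadd]; rfl
              map_smul' := fun c η => by
                show ((g (c • η) : D) : V) = (RingHom.id ℝ) c • ((g η : D) : V)
                rw [hsmul]; rfl }, ?_, ?_, ?_⟩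
    · intro η
      exact ⟨g η, rfl, hg η⟩
    · -- range = D
      apply le_antisymm
      · rintro x ⟨η, rfl⟩
        exact (g η).2
      · intro x hx
        obtain ⟨q, hq⟩ := Submodule.exists_isCompl D
        set π := D.projectionOnto q hq
        set X : D := ⟨x, hx⟩
        have hη : ((ω X).comp π) ∈ S := by
          refine ⟨X, fun Y => ?_⟩
          simp [π, Submodule.projectionOnto_apply_left]
        have : X = g ⟨(ω X).comp π, hη⟩ := by
          refine hgu _ X fun Y => ?_
          simp [π, Submodule.projectionOnto_apply_left]
        exact ⟨⟨(ω X).comp π, hη⟩, by simp [← this, X]⟩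
    · intro η
      have h1 : (η : V →ₗ[ℝ] (Fin k → ℝ)) ((g η : D) : V) = ω (g η) (g η) := hg η (g η)
      have h2 := halt (g η) (g η)
      have h3 : ω (g η) (g η) = 0 := by
        funext i
        have := congrFun h2 i
        simp only [Pi.neg_apply] at this
        simp only [Pi.zero_apply]
        linarith
      show (η : V →ₗ[ℝ] (Fin k → ℝ)) ((g η : D) : V) = 0
      rw [h1, h3]
end

section
/- Let V be a real vector space and L ⊆ A := V ⊕ Hom(V, ℝ^k) a linear subspace such that L ⊆ L^⊥, L ∩ (V ⊕ 0) = {0}, and the projection A → V maps L onto V. Then there is a unique nondegenerate ℝ^k-valued 2-form ω on V with L = {X ⊕ ω^♭(X) : X ∈ V}. (Hence poly-symplectic structures correspond exactly to AV-Dirac type subspaces projecting isomorphically onto V.) -/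
/-- If a linear subspace `L ⊆ A = V ⊕ Hom(V, ℝ^k)` satisfies `L ⊆ L^⊥`,
`L ∩ (V ⊕ 0) = {0}`, and the projection `A → V` maps `L` onto `V`, then there is a
unique nondegenerate `ℝ^k`-valued 2-form `ω` on `V` with `L = graph(ω^♭)`. -/
theorem stmt8 (k : ℕ) (hk : 0 < k) (V : Type*) [AddCommGroup V] [Module ℝ V]
    (L : Submodule ℝ (V × (V →ₗ[ℝ] (Fin k → ℝ))))
    (hiso : ∀ a ∈ L, ∀ b ∈ L, b.2 a.1 + a.2 b.1 = 0)
    (hV0 : ∀ a ∈ L, a.2 = 0 → a = 0)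
    (hproj : ∀ X : V, ∃ η : V →ₗ[ℝ] (Fin k → ℝ), (X, η) ∈ L) :
    ∃! ω : V →ₗ[ℝ] V →ₗ[ℝ] (Fin k → ℝ),
      (∀ X Y : V, ω X Y = - ω Y X) ∧ Function.Injective ⇑ω ∧
      (L : Set (V × (V →ₗ[ℝ] (Fin k → ℝ)))) = {a | a.2 = ω a.1} := by
  have key : ∀ δ : V →ₗ[ℝ] (Fin k → ℝ), ((0:V), δ) ∈ L → δ = 0 := by
    intro δ hδ
    ext Y i
    obtain ⟨γ, hγ⟩ := hproj Y
    have h := hiso (0, δ) hδ (Y, γ) hγ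
    simp only [map_zero, zero_add] at h
    simpa using congrFun h i
  choose f hf using hproj
  have funiq : ∀ X η, (X, η) ∈ L → η = f X := by
    intro X η h
    have hm : ((0:V), η - f X) ∈ L := by
      have := L.sub_mem h (hf X)
      simpa using this
    have := key _ hm
    rwa [sub_eq_zero] at this
  let ω : V →ₗ[ℝ] V →ₗ[ℝ] (Fin k → ℝ) :=
    { toFun := f
      map_add' := fun X Y =>
        (funiq (X + Y) (f X + f Y) (by simpa using L.add_mem (hf X) (hf Y))).symm
      map_smul' := fun c X =>
        (funiq (c • X) (c • f X) (by simpa using L.smul_mem c (hf X))).symm }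
  refine ⟨ω, ⟨?_, ?_, ?_⟩, ?_⟩
  · intro X Y
    have h := hiso (X, f X) (hf X) (Y, f Y) (hf Y)
    exact eq_neg_of_add_eq_zero_right h
  · rw [injective_iff_map_eq_zero]
    intro X hX
    have : ((X, f X) : V × (V →ₗ[ℝ] (Fin k → ℝ))) = 0 := hV0 (X, f X) (hf X) hX
    exact congrArg Prod.fst this
  · ext a
    constructor
    · intro ha
      exact funiq a.1 a.2 ha
    · intro ha
      rw [show a = (a.1, f a.1) from Prod.ext rfl ha]
      exact hf a.1
  · intro ω' ⟨_, _, hset⟩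
    refine LinearMap.ext fun X => ?_
    have hmem : ((X, ω' X) : V × (V →ₗ[ℝ] (Fin k → ℝ))) ∈ L := by
      have : ((X, ω' X) : V × (V →ₗ[ℝ] (Fin k → ℝ))) ∈ (L : Set _) := by
        rw [hset]; rfl
      exact this
    exact funiq X (ω' X) hmem
end

section
/- Let V be a real vector space and L ⊆ A := V ⊕ Hom(V, ℝ^k) a linear subspace with L ⊆ L^⊥ and L^⊥ ∩ (V ⊕ 0) = {0}. Then L ∩ (V ⊕ 0) = {0}; consequently, letting S ⊆ Hom(V, ℝ^k) be the image of L under the projection A → Hom(V, ℝ^k), there is a unique linear map P : S → V with L = {P(η) ⊕ η : η ∈ S}, and (S, P) is pointwise k-poly-Poisson data: η(P(η)) = 0 for all η ∈ S and S° = {0}. -/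
/-- If a linear subspace `L ⊆ A = V ⊕ Hom(V, ℝ^k)` satisfies `L ⊆ L^⊥`
and `L^⊥ ∩ (V ⊕ 0) = {0}`, then `L ∩ (V ⊕ 0) = {0}`; letting `S` be the image of `L`
under the projection to `Hom(V, ℝ^k)`, there is a unique linear `P : S → V` with
`L = {P(η) ⊕ η : η ∈ S}`, and `(S, P)` is pointwise `k`-poly-Poisson data:
`η(P(η)) = 0` for all `η ∈ S` and `S° = {0}`. -/
theorem stmt10 (k : ℕ) (hk : 0 < k) (V : Type*) [AddCommGroup V] [Module ℝ V]
    (L : Submodule ℝ (V × (V →ₗ[ℝ] (Fin k → ℝ))))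
    (hiso : ∀ a ∈ L, ∀ b ∈ L, b.2 a.1 + a.2 b.1 = 0)
    (hperp : ∀ a : V × (V →ₗ[ℝ] (Fin k → ℝ)),
      (∀ b ∈ L, b.2 a.1 + a.2 b.1 = 0) → a.2 = 0 → a = 0)
    (S : Submodule ℝ (V →ₗ[ℝ] (Fin k → ℝ)))
    (hS : ∀ η : V →ₗ[ℝ] (Fin k → ℝ), η ∈ S ↔ ∃ X : V, (X, η) ∈ L) :
    (∀ a ∈ L, a.2 = 0 → a = 0) ∧
    (∃! P : S →ₗ[ℝ] V,
      (L : Set (V × (V →ₗ[ℝ] (Fin k → ℝ))))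
        = {a | ∃ η : S, a = (P η, (η : V →ₗ[ℝ] (Fin k → ℝ)))}) ∧
    (∀ P : S →ₗ[ℝ] V,
      ((L : Set (V × (V →ₗ[ℝ] (Fin k → ℝ))))
        = {a | ∃ η : S, a = (P η, (η : V →ₗ[ℝ] (Fin k → ℝ)))}) →
      ∀ η : S, (η : V →ₗ[ℝ] (Fin k → ℝ)) (P η) = 0) ∧
    (∀ X : V, (∀ η ∈ S, η X = 0) → X = 0) := by
  have hfst : ∀ a ∈ L, a.2 = 0 → a = 0 := fun a ha h2 =>
    hperp a (fun b hb => hiso a ha b hb) h2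
  have huniq : ∀ (X X' : V) (η : V →ₗ[ℝ] (Fin k → ℝ)),
      (X, η) ∈ L → (X', η) ∈ L → X = X' := by
    intro X X' η h1 h2
    have h0 : ((X, η) - (X', η) : V × (V →ₗ[ℝ] (Fin k → ℝ))) ∈ L := L.sub_mem h1 h2
    have := hfst _ h0 (by simp)
    have hx : X - X' = 0 := congrArg Prod.fst this
    exact sub_eq_zero.mp hx
  have spec : ∀ η : S, (Classical.choose ((hS η).mp η.2), (η : V →ₗ[ℝ] (Fin k → ℝ))) ∈ L :=
    fun η => Classical.choose_spec ((hS η).mp η.2)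
  set f : S → V := fun η => Classical.choose ((hS η).mp η.2) with hf
  let P : S →ₗ[ℝ] V :=
    { toFun := f
      map_add' := by
        intro η γ
        refine huniq _ _ _ (spec (η + γ)) ?_
        have := L.add_mem (spec η) (spec γ)
        simpa using this
      map_smul' := by
        intro c η
        refine huniq _ _ _ (spec (c • η)) ?_
        have := L.smul_mem c (spec η)
        simpa using this }
  have hgraph : (L : Set (V × (V →ₗ[ℝ] (Fin k → ℝ))))
      = {a | ∃ η : S, a = (P η, (η : V →ₗ[ℝ] (Fin k → ℝ)))} := by
    ext a
    constructor
    · intro ha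
      have hmem : a.2 ∈ S := (hS a.2).mpr ⟨a.1, by simpa using ha⟩
      refine ⟨⟨a.2, hmem⟩, ?_⟩
      have : a.1 = P ⟨a.2, hmem⟩ := huniq _ _ _ (by simpa using ha) (spec ⟨a.2, hmem⟩)
      exact Prod.ext this rfl
    · rintro ⟨η, rfl⟩
      exact spec η
  refine ⟨hfst, ⟨P, hgraph, ?_⟩, ?_, ?_⟩
  · intro P' hP'
    ext η
    have h1 : (P' η, (η : V →ₗ[ℝ] (Fin k → ℝ))) ∈ L := by
      rw [← SetLike.mem_coe, hP']; exact ⟨η, rfl⟩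
    exact huniq _ _ _ h1 (spec η)
  · intro Q hQ η
    have h1 : (Q η, (η : V →ₗ[ℝ] (Fin k → ℝ))) ∈ L := by
      rw [← SetLike.mem_coe, hQ]; exact ⟨η, rfl⟩
    have := hiso _ h1 _ h1
    have h2 : (2 : ℝ) • ((η : V →ₗ[ℝ] (Fin k → ℝ)) (Q η)) = 0 := by
      rw [two_smul]; exact this
    exact (smul_eq_zero.mp h2).resolve_left (by norm_num)
  · intro X hX
    have : ((X, 0) : V × (V →ₗ[ℝ] (Fin k → ℝ))) = 0 := by
      refine hperp (X, 0) (fun b hb => ?_) rfl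
      have hb2 : b.2 ∈ S := (hS b.2).mpr ⟨b.1, by simpa using hb⟩
      simp [hX b.2 hb2]
    exact congrArg Prod.fst this
end

section
/- Let V be a real vector space and L ⊆ A := V ⊕ Hom(V, ℝ^k) a linear subspace. Then the following are equivalent: (b) L ⊆ L^⊥ and L^⊥ ∩ (V ⊕ 0) = {0}; (c) L = L^⊥ ∩ (L + (V ⊕ 0)) and L ∩ (V ⊕ 0) = {0}. (This is the linear-algebraic equivalence of conditions (b) and (c) in Proposition 3.11 characterizing poly-Poisson structures among subbundles of TM ⊕ (⊕_(k)T*M).) -/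
/-- For a linear subspace `L ⊆ A = V ⊕ Hom(V, ℝ^k)`, condition
(b): `L ⊆ L^⊥` and `L^⊥ ∩ (V ⊕ 0) = {0}`, is equivalent to condition
(c): `L = L^⊥ ∩ (L + (V ⊕ 0))` and `L ∩ (V ⊕ 0) = {0}`
(the equivalence of (b) and (c) in Proposition 3.11). -/
theorem stmt11 (k : ℕ) (hk : 0 < k) (V : Type*) [AddCommGroup V] [Module ℝ V]
    (L : Submodule ℝ (V × (V →ₗ[ℝ] (Fin k → ℝ))))
    (Lperp : Set (V × (V →ₗ[ℝ] (Fin k → ℝ))))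
    (hperp : Lperp = {a | ∀ b ∈ L, b.2 a.1 + a.2 b.1 = 0}) :
    (((L : Set (V × (V →ₗ[ℝ] (Fin k → ℝ)))) ⊆ Lperp) ∧
        Lperp ∩ {a | a.2 = 0} = {0}) ↔
    (((L : Set (V × (V →ₗ[ℝ] (Fin k → ℝ))))
        = Lperp ∩ {a | ∃ b ∈ L, ∃ X : V, a = b + (X, 0)}) ∧
      (L : Set (V × (V →ₗ[ℝ] (Fin k → ℝ)))) ∩ {a | a.2 = 0} = {0}) := by
  subst hperp
  constructor
  · rintro ⟨hsub, hint⟩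
    constructor
    · ext a
      constructor
      · intro ha
        exact ⟨hsub ha, a, ha, 0, by simp⟩
      · rintro ⟨hap, b, hb, X, rfl⟩
        have hbp := hsub hb
        have h2 : ((X, 0) : V × (V →ₗ[ℝ] (Fin k → ℝ))) ∈
            ({a | ∀ b ∈ L, b.2 a.1 + a.2 b.1 = 0} ∩ {a | a.2 = 0} : Set _) := by
          refine ⟨fun c hc => ?_, rfl⟩
          have h1 := hap c hc
          have h2 := hbp c hc
          simp only [Prod.fst_add, Prod.snd_add, map_add, LinearMap.add_apply,
            LinearMap.zero_apply] at h1 ⊢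
          linear_combination h1 - h2
        rw [hint] at h2
        simp only [Set.mem_singleton_iff] at h2
        rw [h2]
        simpa using hb
    · ext a
      constructor
      · rintro ⟨haL, ha2⟩
        have : a ∈ ({a | ∀ b ∈ L, b.2 a.1 + a.2 b.1 = 0} ∩ {a | a.2 = 0} : Set _) :=
          ⟨hsub haL, ha2⟩
        rwa [hint] at this
      · rintro rfl
        exact ⟨L.zero_mem, rfl⟩
  · rintro ⟨heq, hint⟩
    have hsub : (L : Set (V × (V →ₗ[ℝ] (Fin k → ℝ)))) ⊆
        {a | ∀ b ∈ L, b.2 a.1 + a.2 b.1 = 0} := by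
      intro a ha
      have : a ∈ ({a | ∀ b ∈ L, b.2 a.1 + a.2 b.1 = 0}
          ∩ {a | ∃ b ∈ L, ∃ X : V, a = b + (X, 0)} : Set _) := heq ▸ ha
      exact this.1
    refine ⟨hsub, ?_⟩
    ext a
    constructor
    · rintro ⟨hap, ha2⟩
      have haL : a ∈ (L : Set (V × (V →ₗ[ℝ] (Fin k → ℝ)))) := by
        rw [heq]
        refine ⟨hap, 0, L.zero_mem, a.1, ?_⟩
        simp only [Prod.ext_iff, Prod.fst_add, Prod.snd_add]
        exact ⟨by simp, by simpa using ha2⟩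
      have : a ∈ ((L : Set (V × (V →ₗ[ℝ] (Fin k → ℝ)))) ∩ {a | a.2 = 0}) := ⟨haL, ha2⟩
      rwa [hint] at this
    · rintro rfl
      exact ⟨by simp, rfl⟩
end

section
/- Let V be a finite-dimensional real vector space and consider A := V ⊕ V* with the symmetric pairing ⟨X ⊕ η, Y ⊕ γ⟩ := γ(X) + η(Y). Then a linear subspace L ⊆ A satisfies L = L^⊥ ∩ (L + (V ⊕ 0)) if and only if L = L^⊥. (This is the claim of Remark 3.12 that for k = 1 the relaxed lagrangian condition (3.11) is equivalent to the lagrangian condition (3.9), so that the objects of Proposition 3.11 are usual Dirac structures when k = 1.) -/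
open LinearMap (BilinForm)

/-- The pairing `⟨X ⊕ η, Y ⊕ γ⟩ = γ X + η Y` as a bilinear form on `V × V*`. -/
noncomputable def stmt12Form (V : Type*) [AddCommGroup V] [Module ℝ V] :
    BilinForm ℝ (V × Module.Dual ℝ V) :=
  LinearMap.mk₂ ℝ (fun x y => y.2 x.1 + x.2 y.1)
    (fun x y z => by simp [Prod.fst_add, Prod.snd_add]; ring)
    (fun c x y => by simp; ring)
    (fun x y z => by simp [Prod.fst_add, Prod.snd_add]; ring)
    (fun c x y => by simp; ring)

lemma stmt12Form_apply {V : Type*} [AddCommGroup V] [Module ℝ V]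
    (x y : V × Module.Dual ℝ V) : stmt12Form V x y = y.2 x.1 + x.2 y.1 := rfl

lemma stmt12Form_isRefl (V : Type*) [AddCommGroup V] [Module ℝ V] :
    (stmt12Form V).IsRefl := fun x y h => by
  rw [stmt12Form_apply] at h ⊢; linarith

lemma stmt12Form_nondegenerate (V : Type*) [AddCommGroup V] [Module ℝ V] :
    (stmt12Form V).Nondegenerate := by
  refine (LinearMap.IsRefl.nondegenerate_iff_separatingLeft (stmt12Form_isRefl V)).mpr ?_
  intro x hx
  have h1 : x.2 = 0 := by
    ext Y
    have := hx (Y, 0)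
    simpa [stmt12Form_apply] using this
  have h2 : x.1 = 0 := by
    rw [← Module.forall_dual_apply_eq_zero_iff ℝ x.1]
    intro φ
    have := hx (0, φ)
    simpa [stmt12Form_apply, h1] using this
  exact Prod.ext h2 h1

/-- For a finite-dimensional real vector space `V` and `A = V ⊕ V*` with the
symmetric pairing `⟨X ⊕ η, Y ⊕ γ⟩ = γ(X) + η(Y)`, a linear subspace `L ⊆ A` satisfies
`L = L^⊥ ∩ (L + (V ⊕ 0))` if and only if `L = L^⊥` (Remark 3.12: for `k = 1` the relaxed
lagrangian condition is equivalent to the lagrangian condition). -/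
theorem stmt12 (V : Type*) [AddCommGroup V] [Module ℝ V] [FiniteDimensional ℝ V]
    (L : Submodule ℝ (V × Module.Dual ℝ V))
    (Lperp : Set (V × Module.Dual ℝ V))
    (hperp : Lperp = {a | ∀ b ∈ L, b.2 a.1 + a.2 b.1 = 0}) :
    ((L : Set (V × Module.Dual ℝ V))
        = Lperp ∩ {a | ∃ b ∈ L, ∃ X : V, a = b + (X, 0)}) ↔
    (L : Set (V × Module.Dual ℝ V)) = Lperp := by
  set B := stmt12Form V with hB
  have hrefl := stmt12Form_isRefl V
  have hnd := stmt12Form_nondegenerate V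
  -- identify Lperp with the bilinear-form orthogonal
  have hLperp : Lperp = ↑(B.orthogonal L) := by
    rw [hperp]
    ext a
    simp only [SetLike.mem_coe, LinearMap.BilinForm.mem_orthogonal_iff, Set.mem_setOf_eq,
      LinearMap.BilinForm.IsOrtho, stmt12Form_apply, hB]
    exact ⟨fun h n hn => by linarith [h n hn], fun h b hb => by linarith [h b hb]⟩
  -- identify the sum set with L ⊔ W where W = V ⊕ 0
  set W : Submodule ℝ (V × Module.Dual ℝ V) := (⊤ : Submodule ℝ V).prod ⊥ with hW
  have hsum : {a : V × Module.Dual ℝ V | ∃ b ∈ L, ∃ X : V, a = b + (X, 0)}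
      = ↑(L ⊔ W) := by
    ext a
    constructor
    · rintro ⟨b, hb, X, rfl⟩
      exact Submodule.add_mem_sup hb (by simp [hW, Submodule.mem_prod])
    · intro ha
      rcases Submodule.mem_sup.mp ha with ⟨b, hb, w, hw, rfl⟩
      rw [hW, Submodule.mem_prod] at hw
      refine ⟨b, hb, w.1, ?_⟩
      have : w = (w.1, (0 : Module.Dual ℝ V)) := Prod.ext rfl hw.2
      rw [this]
  rw [hLperp, hsum]
  constructor
  · intro h
    -- h : ↑L = ↑(orth L) ∩ ↑(L ⊔ W)
    have hL : L = (B.orthogonal L) ⊓ (L ⊔ W) := by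
      apply SetLike.coe_injective
      rw [h]; rfl
    -- orth (L ⊔ W) ≤ L
    have key : B.orthogonal (L ⊔ W) ≤ L := by
      intro a ha
      have ha2 : a.2 = 0 := by
        ext Y
        have hmem : ((Y, 0) : V × Module.Dual ℝ V) ∈ L ⊔ W :=
          Submodule.mem_sup_right (by simp [hW, Submodule.mem_prod])
        have := ha _ hmem
        simpa [LinearMap.BilinForm.IsOrtho, hB, stmt12Form_apply] using this
      have haW : a ∈ W := by simp [hW, Submodule.mem_prod, ha2]
      have haOrth : a ∈ B.orthogonal L :=
        (LinearMap.BilinForm.orthogonal_le le_sup_left) ha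
      rw [hL]
      exact ⟨haOrth, Submodule.mem_sup_right haW⟩
    have step : B.orthogonal L ≤ L ⊔ W := by
      have := LinearMap.BilinForm.orthogonal_le key (B := B)
      rwa [LinearMap.BilinForm.orthogonal_orthogonal hnd hrefl] at this
    have : B.orthogonal L ≤ L := by
      intro a ha
      rw [hL]
      exact ⟨ha, step ha⟩
    have hLle : L ≤ B.orthogonal L := by
      intro a ha
      rw [hL] at ha
      exact ha.1
    exact congrArg _ (le_antisymm hLle this)
  · intro h
    rw [← h]
    ext a
    constructor
    · intro ha
      refine ⟨ha, Submodule.mem_sup_left ha⟩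
    · exact fun ha => ha.1
end

section
/- Let g be a finite-dimensional real vector space with dim g ≥ 1, let U := g* × g*, and for u ∈ g let η_u ∈ Hom(U, ℝ²) be defined by η_u(ζ₁, ζ₂) := (ζ₁(u), ζ₂(u)). Then the subspace L := {0 ⊕ η_u : u ∈ g} of A := U ⊕ Hom(U, ℝ²) satisfies L ⊆ L^⊥ but L ≠ L^⊥ (L is isotropic but properly contained in its orthogonal). (This is the counterexample showing that the graph of the direct-sum poly-Poisson structure on g*_(2) at the point ζ = (0,0) is not lagrangian, so poly-Poisson structures are in general not AV-Dirac structures.) -/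
/-- For a finite-dimensional real vector space `g` with `dim g ≥ 1`,
`U := g* × g*`, and `η_u(ζ₁, ζ₂) := (ζ₁(u), ζ₂(u))`, the subspace
`L := {0 ⊕ η_u : u ∈ g}` of `A := U ⊕ Hom(U, ℝ²)` is isotropic but properly
contained in its orthogonal: `L ⊆ L^⊥` but `L ≠ L^⊥`. -/
theorem stmt13 (g : Type*) [AddCommGroup g] [Module ℝ g] [FiniteDimensional ℝ g]
    (hdim : 1 ≤ Module.finrank ℝ g)
    (L : Set ((Module.Dual ℝ g × Module.Dual ℝ g) ×
      ((Module.Dual ℝ g × Module.Dual ℝ g) →ₗ[ℝ] (Fin 2 → ℝ))))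
    (hL : L = {a | a.1 = 0 ∧ ∃ u : g,
      ∀ ζ : Module.Dual ℝ g × Module.Dual ℝ g, a.2 ζ = ![ζ.1 u, ζ.2 u]}) :
    (∀ a ∈ L, ∀ b ∈ L, b.2 a.1 + a.2 b.1 = 0) ∧
    L ≠ {a | ∀ b ∈ L, b.2 a.1 + a.2 b.1 = 0} := by
  subst hL
  constructor
  · rintro a ⟨ha, -⟩ b ⟨hb, -⟩
    rw [ha, hb]
    simp
  · have : Nontrivial g := Module.nontrivial_of_finrank_pos (R := ℝ) (by omega)
    obtain ⟨u₀, hu₀⟩ := exists_ne (0 : g)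
    set φ : (Module.Dual ℝ g × Module.Dual ℝ g) →ₗ[ℝ] (Fin 2 → ℝ) :=
      { toFun := fun ζ => ![ζ.1 u₀, 0]
        map_add' := by
          intro x y
          funext i
          fin_cases i <;> simp
        map_smul' := by
          intro c x
          funext i
          fin_cases i <;> simp }
    intro hEq
    have hmem : ((0, φ) : (Module.Dual ℝ g × Module.Dual ℝ g) ×
        ((Module.Dual ℝ g × Module.Dual ℝ g) →ₗ[ℝ] (Fin 2 → ℝ))) ∈
        {a : (Module.Dual ℝ g × Module.Dual ℝ g) ×
          ((Module.Dual ℝ g × Module.Dual ℝ g) →ₗ[ℝ] (Fin 2 → ℝ)) |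
          ∀ b ∈ {a : (Module.Dual ℝ g × Module.Dual ℝ g) ×
            ((Module.Dual ℝ g × Module.Dual ℝ g) →ₗ[ℝ] (Fin 2 → ℝ)) | a.1 = 0 ∧ ∃ u : g,
          ∀ ζ : Module.Dual ℝ g × Module.Dual ℝ g, a.2 ζ = ![ζ.1 u, ζ.2 u]},
          b.2 a.1 + a.2 b.1 = 0} := by
      rintro b ⟨hb, -⟩
      simp [hb]
    rw [← hEq] at hmem
    obtain ⟨-, u, hu⟩ := hmem
    have h2 : u = 0 := by
      rw [← Module.forall_dual_apply_eq_zero_iff (R := ℝ)]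
      intro f
      have := congrFun (hu (0, f)) 1
      simpa [φ] using this.symm
    have h1 : u₀ = 0 := by
      rw [← Module.forall_dual_apply_eq_zero_iff (R := ℝ)]
      intro f
      have := congrFun (hu (f, 0)) 0
      simpa [φ, h2] using this
    exact hu₀ h1
end

section
/- Let ω be a nondegenerate ℝ^k-valued 2-form on a real vector space V and let W ⊆ V be a subspace. Then (W^ω)^ω = (Im(ω^♭) ∩ A_W)°, where A_W := {η ∈ Hom(V, ℝ^k) : η(X) = 0 for all X ∈ W} and, for a subset T ⊆ Hom(V, ℝ^k), T° := {Z ∈ V : η(Z) = 0 for all η ∈ T}. (This identity (ker dJ)^ω = (S ∩ ⊕_kAnn(V))° is the key linear step in the poly-symplectic reduction results, Propositions 4.3 and 4.4.) -/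
/-- For a nondegenerate `ℝ^k`-valued 2-form `ω` on `V` and a subspace
`W ⊆ V`, one has `(W^ω)^ω = (Im(ω^♭) ∩ A_W)°`, where
`W^ω = {Y : ω(X,Y) = 0 ∀ X ∈ W}`, `A_W = {η : η(X) = 0 ∀ X ∈ W}` and
`T° = {Z : η(Z) = 0 ∀ η ∈ T}`. -/
theorem stmt14 (k : ℕ) (hk : 0 < k) (V : Type*) [AddCommGroup V] [Module ℝ V]
    (ω : V →ₗ[ℝ] V →ₗ[ℝ] (Fin k → ℝ))
    (halt : ∀ X Y : V, ω X Y = - ω Y X)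
    (hnd : Function.Injective ⇑ω)
    (W : Submodule ℝ V) :
    {Z : V | ∀ Y ∈ {Y : V | ∀ X ∈ W, ω X Y = 0}, ω Y Z = 0}
      = {Z : V | ∀ η ∈ (Set.range ⇑ω) ∩ {η : V →ₗ[ℝ] (Fin k → ℝ) | ∀ X ∈ W, η X = 0},
          η Z = 0} := by
  ext Z
  constructor
  · rintro h η ⟨⟨Y, rfl⟩, hη⟩
    exact h Y fun X hX => by rw [halt X Y, hη X hX, neg_zero]
  · intro h Y hY
    exact h (ω Y) ⟨⟨Y, rfl⟩, fun X hX => by rw [halt Y X, hY X hX, neg_zero]⟩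
end

section
/- Let ω be a nondegenerate ℝ^k-valued 2-form on a real vector space V and let K ⊆ V be a subspace. Then ω(Z, Y) = 0 for all Z ∈ K ∩ K^ω and Y ∈ K^ω, so ω induces a well-defined alternating ℝ^k-valued 2-form ω̄ on the quotient K^ω / (K ∩ K^ω); and ω̄ is nondegenerate if and only if (K^ω)^ω ∩ K^ω ⊆ K. (This is the pointwise statement underlying Proposition 4.3: the reduced form on J^{-1}(ζ)/G_ζ is poly-symplectic if and only if (S ∩ ⊕_kAnn(V))° ∩ TJ^{-1}(ζ) ⊆ V ∩ TJ^{-1}(ζ).) -/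
/-- For an `ℝ^k`-valued bilinear form `ω` on `V` and a set `K ⊆ V`, the `ω`-orthogonal
`K^ω := {Y : ω(X, Y) = 0 for all X ∈ K}`, a linear subspace of `V`. -/
def omegaPolar {k : ℕ} {V : Type*} [AddCommGroup V] [Module ℝ V]
    (ω : V →ₗ[ℝ] V →ₗ[ℝ] (Fin k → ℝ)) (K : Set V) : Submodule ℝ V where
  carrier := {Y | ∀ X ∈ K, ω X Y = 0}
  add_mem' := by
    intro a b ha hb X hX
    simp [map_add, ha X hX, hb X hX]
  zero_mem' := by
    intro X hX
    simp
  smul_mem' := by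
    intro c a ha X hX
    simp [map_smul, ha X hX]

/-- For a nondegenerate `ℝ^k`-valued 2-form `ω` on `V` and a subspace
`K ⊆ V`: `ω(Z, Y) = 0` for `Z ∈ K ∩ K^ω` and `Y ∈ K^ω`; there is a unique induced
`ℝ^k`-valued bilinear form `ω̄` on the quotient `K^ω / (K ∩ K^ω)`; it is alternating,
and it is nondegenerate iff `(K^ω)^ω ∩ K^ω ⊆ K`. -/
theorem stmt15 (k : ℕ) (hk : 0 < k) (V : Type*) [AddCommGroup V] [Module ℝ V]
    (ω : V →ₗ[ℝ] V →ₗ[ℝ] (Fin k → ℝ))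
    (halt : ∀ X Y : V, ω X Y = - ω Y X)
    (hnd : Function.Injective ⇑ω)
    (K : Submodule ℝ V) :
    (∀ Z : V, Z ∈ K → Z ∈ omegaPolar ω (K : Set V) →
      ∀ Y ∈ omegaPolar ω (K : Set V), ω Z Y = 0) ∧
    (∃! ωbar :
        ((omegaPolar ω (K : Set V)) ⧸ (K.comap (omegaPolar ω (K : Set V)).subtype)) →ₗ[ℝ]
        ((omegaPolar ω (K : Set V)) ⧸ (K.comap (omegaPolar ω (K : Set V)).subtype)) →ₗ[ℝ]
        (Fin k → ℝ),
      ∀ Y Z : omegaPolar ω (K : Set V),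
        ωbar (Submodule.Quotient.mk Y) (Submodule.Quotient.mk Z) = ω (Y : V) (Z : V)) ∧
    (∀ ωbar :
        ((omegaPolar ω (K : Set V)) ⧸ (K.comap (omegaPolar ω (K : Set V)).subtype)) →ₗ[ℝ]
        ((omegaPolar ω (K : Set V)) ⧸ (K.comap (omegaPolar ω (K : Set V)).subtype)) →ₗ[ℝ]
        (Fin k → ℝ),
      (∀ Y Z : omegaPolar ω (K : Set V),
        ωbar (Submodule.Quotient.mk Y) (Submodule.Quotient.mk Z) = ω (Y : V) (Z : V)) →
      (∀ a b, ωbar a b = - ωbar b a) ∧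
      (Function.Injective ⇑ωbar ↔
        ∀ Z : V, Z ∈ omegaPolar ω ((omegaPolar ω (K : Set V) : Submodule ℝ V) : Set V) →
          Z ∈ omegaPolar ω (K : Set V) → Z ∈ K)) := by
  set W := omegaPolar ω (K : Set V) with hWdef
  set N := K.comap W.subtype with hNdef
  -- the restricted bilinear form on W
  set A : W →ₗ[ℝ] W →ₗ[ℝ] (Fin k → ℝ) := (ω.compl₂ W.subtype).comp W.subtype with hAdef
  have hAapp : ∀ Y Z : W, A Y Z = ω (Y : V) (Z : V) := fun Y Z => rfl
  have hA1 : N ≤ LinearMap.ker A := by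
    intro Y hY
    apply LinearMap.ext
    intro Z
    simpa [hAapp] using Z.2 (Y : V) hY
  set C : (W ⧸ N) →ₗ[ℝ] W →ₗ[ℝ] (Fin k → ℝ) := Submodule.liftQ N A hA1 with hCdef
  have hCapp : ∀ (Y : W) (Z : W), C (Submodule.Quotient.mk Y) Z = ω (Y : V) (Z : V) :=
    fun Y Z => rfl
  have hC2 : N ≤ LinearMap.ker C.flip := by
    intro Z hZ
    apply LinearMap.ext
    intro q
    obtain ⟨Y, rfl⟩ := Submodule.Quotient.mk_surjective N q
    have h0 : ω (Z : V) (Y : V) = 0 := Y.2 (Z : V) hZ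
    have : ω (Y : V) (Z : V) = 0 := by rw [halt, h0, neg_zero]
    simpa [LinearMap.flip_apply, hCapp] using this
  set ωb : (W ⧸ N) →ₗ[ℝ] (W ⧸ N) →ₗ[ℝ] (Fin k → ℝ) :=
    (Submodule.liftQ N C.flip hC2).flip with hωbdef
  have hspec : ∀ Y Z : W,
      ωb (Submodule.Quotient.mk Y) (Submodule.Quotient.mk Z) = ω (Y : V) (Z : V) :=
    fun Y Z => rfl
  refine ⟨?_, ?_, ?_⟩
  · intro Z hZK _ Y hY
    exact hY Z hZK
  · refine ⟨ωb, hspec, ?_⟩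
    intro g hg
    apply LinearMap.ext
    intro a
    obtain ⟨Y, rfl⟩ := Submodule.Quotient.mk_surjective N a
    apply LinearMap.ext
    intro b
    obtain ⟨Z, rfl⟩ := Submodule.Quotient.mk_surjective N b
    rw [hg, hspec]
  · intro g hg
    constructor
    · intro a b
      obtain ⟨Y, rfl⟩ := Submodule.Quotient.mk_surjective N a
      obtain ⟨Z, rfl⟩ := Submodule.Quotient.mk_surjective N b
      rw [hg, hg, halt]
    · constructor
      · intro hinj Z hZWW hZW
        have h0 : g (Submodule.Quotient.mk ⟨Z, hZW⟩) = 0 := by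
          apply LinearMap.ext
          intro b
          obtain ⟨Y, rfl⟩ := Submodule.Quotient.mk_surjective N b
          have hYZ : ω (Y : V) Z = 0 := hZWW (Y : V) Y.2
          have : ω Z (Y : V) = 0 := by rw [halt, hYZ, neg_zero]
          simpa [hg] using this
        have := hinj (by rw [h0, map_zero] : g (Submodule.Quotient.mk ⟨Z, hZW⟩) = g 0)
        have hmem : (⟨Z, hZW⟩ : W) ∈ N := (Submodule.Quotient.mk_eq_zero N).mp this
        exact hmem
      · intro h
        rw [injective_iff_map_eq_zero]
        intro a ha
        obtain ⟨Z, rfl⟩ := Submodule.Quotient.mk_surjective N a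
        rw [Submodule.Quotient.mk_eq_zero]
        refine h (Z : V) ?_ Z.2
        intro X hX
        have hZX : ω (Z : V) X = 0 := by
          have := hg Z ⟨X, hX⟩
          rw [ha] at this
          simpa using this.symm
        rw [halt, hZX, neg_zero]
end

section
/- Let V be a real vector space, S ⊆ Hom(V, ℝ^k) a linear subspace and P : S → V a linear map with η(P(η)) = 0 for all η ∈ S. Let K ⊆ V be a subspace such that (S ∩ A_K)° ⊆ K, where A_K := {η ∈ Hom(V, ℝ^k) : η(X) = 0 for all X ∈ K} and (S ∩ A_K)° := {X ∈ V : η(X) = 0 for all η ∈ S ∩ A_K}. Let q : V → V/K be the quotient map and q* : Hom(V/K, ℝ^k) → Hom(V, ℝ^k) the (injective) pullback map η̄ ↦ η̄ ∘ q, whose image is A_K. Define S_red := {η̄ ∈ Hom(V/K, ℝ^k) : q*η̄ ∈ S} and P_red : S_red → V/K by P_red(η̄) := q(P(q*η̄)). Then (S_red, P_red) is pointwise k-poly-Poisson data on V/K: η̄(P_red(η̄)) = 0 for all η̄ ∈ S_red, and S_red° = {0}. (This is the pointwise content of the poly-Poisson reduction Theorem 4.1: conditions (i) and (ii) of the definition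 hold for the reduced structure on M/G.) -/
/-- Pointwise poly-Poisson reduction (Theorem 4.1). Given
`S ⊆ Hom(V, ℝ^k)` and linear `P : S → V` with `η(P(η)) = 0`, and a subspace `K ⊆ V`
with `(S ∩ A_K)° ⊆ K`, the reduced data on `V/K`, namely
`S_red = {η̄ : η̄ ∘ q ∈ S}` and `P_red(η̄) = q(P(η̄ ∘ q))` for the quotient map
`q : V → V/K`, is pointwise `k`-poly-Poisson data: `η̄(P_red(η̄)) = 0` for all
`η̄ ∈ S_red`, and `S_red° = {0}`. -/
theorem stmt16 (k : ℕ) (hk : 0 < k) (V : Type*) [AddCommGroup V] [Module ℝ V]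
    (S : Submodule ℝ (V →ₗ[ℝ] (Fin k → ℝ))) (P : S →ₗ[ℝ] V)
    (h1 : ∀ η : S, (η : V →ₗ[ℝ] (Fin k → ℝ)) (P η) = 0)
    (K : Submodule ℝ V)
    (hred : ∀ X : V,
      (∀ η : V →ₗ[ℝ] (Fin k → ℝ), η ∈ S → (∀ Y ∈ K, η Y = 0) → η X = 0) → X ∈ K) :
    (∀ (ηbar : (V ⧸ K) →ₗ[ℝ] (Fin k → ℝ)) (h : ηbar ∘ₗ K.mkQ ∈ S),
      ηbar (K.mkQ (P ⟨ηbar ∘ₗ K.mkQ, h⟩)) = 0) ∧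
    (∀ x : V ⧸ K,
      (∀ ηbar : (V ⧸ K) →ₗ[ℝ] (Fin k → ℝ), ηbar ∘ₗ K.mkQ ∈ S → ηbar x = 0) → x = 0) := by
  constructor
  · intro ηbar h
    have := h1 ⟨ηbar ∘ₗ K.mkQ, h⟩
    simpa using this
  · intro x hx
    obtain ⟨X, rfl⟩ := K.mkQ_surjective x
    have hXK : X ∈ K := by
      apply hred
      intro η hηS hηK
      have hker : K ≤ LinearMap.ker η := fun y hy => hηK y hy
      have hfac : (K.liftQ η hker) ∘ₗ K.mkQ = η := K.liftQ_mkQ η hker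
      have := hx (K.liftQ η hker) (by rw [hfac]; exact hηS)
      simpa [hfac] using this
    simpa [Submodule.Quotient.mk_eq_zero] using hXK
end
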